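/- Let ẑ be a Gaussian random vector on ℝ^p with mean 0 and (symmetric positive semidefinite) covariance C_ẑ, let r ∈ ℝ^p, set z := ẑ + r and C_z := C_ẑ + r rᵀ. Then for every real p×p matrix S: E[ z zᵀ S z zᵀ ] = C_z S C_z + C_z Sᵀ C_z + ⟨C_z, S⟩ C_z − 2 ⟨r rᵀ, S⟩ r rᵀ, where ⟨·,·⟩ is the Frobenius inner product. -/

import Mathlib

open Matrix MeasureTheory ProbabilityTheory
open Real
open scoped NNReal ENNReal



lemma pow_le_exp_abs (n : ℕ) (x : ℝ) : |x| ^ n ≤ (n : ℝ) ^ n * rexp |x| := by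
  rcases Nat.eq_zero_or_pos n with hn | hn
  · simp [hn, Real.one_le_exp (abs_nonneg x)]
  have hn' : (0 : ℝ) < n := by exact_mod_cast hn
  have h1 : |x| / n ≤ rexp (|x| / n) := by
    have := Real.add_one_le_exp (|x| / n)
    linarith
  have h2 : (|x| / n) ^ n ≤ rexp (|x| / n) ^ n :=
    pow_le_pow_left₀ (by positivity) h1 n
  have h3 : rexp (|x| / n) ^ n = rexp |x| := by
    rw [← Real.exp_nat_mul]
    congr 1
    field_simp
  have h4 : |x| ^ n = (n : ℝ) ^ n * (|x| / n) ^ n := by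
    rw [← mul_pow]
    congr 1
    field_simp
  calc |x| ^ n = (n : ℝ) ^ n * (|x| / n) ^ n := h4
    _ ≤ (n : ℝ) ^ n * rexp |x| := by
        rw [← h3]
        exact mul_le_mul_of_nonneg_left h2 (by positivity)

lemma integrable_pow_mul_gauss {b : ℝ} (hb : 0 < b) (n : ℕ) :
    Integrable fun x : ℝ => x ^ n * rexp (-b * x ^ 2) := by
  have h2 : 0 < b / 2 := by linarith
  refine Integrable.mono' (((integrable_exp_neg_mul_sq h2).const_mul
    ((n : ℝ) ^ n * rexp (1 / (2 * b))))) ?_ (Filter.Eventually.of_forall fun x => ?_)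
  · exact ((measurable_id.pow_const n).mul
      (((measurable_id.pow_const 2).const_mul (-b)).exp)).aestronglyMeasurable
  · have hxa : |x| - b * x ^ 2 ≤ 1 / (2 * b) - b / 2 * x ^ 2 := by
      have h5 : 0 ≤ (1 + b ^ 2 * x ^ 2 - 2 * b * |x|) / (2 * b) :=
        div_nonneg (by nlinarith [sq_nonneg (b * |x| - 1), sq_abs x]) (by linarith)
      have h6 : 1 / (2 * b) - b / 2 * x ^ 2 - (|x| - b * x ^ 2)
          = (1 + b ^ 2 * x ^ 2 - 2 * b * |x|) / (2 * b) := by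
        field_simp
        ring
      linarith
    have key : |x| ^ n * rexp (-b * x ^ 2) ≤
        (n : ℝ) ^ n * rexp (1 / (2 * b)) * rexp (-(b / 2) * x ^ 2) := by
      calc |x| ^ n * rexp (-b * x ^ 2) ≤ ((n : ℝ) ^ n * rexp |x|) * rexp (-b * x ^ 2) :=
            mul_le_mul_of_nonneg_right (pow_le_exp_abs n x) (Real.exp_pos _).le
        _ = (n : ℝ) ^ n * rexp (|x| - b * x ^ 2) := by rw [mul_assoc, ← Real.exp_add]; ring_nf
        _ ≤ (n : ℝ) ^ n * rexp (1 / (2 * b) - b / 2 * x ^ 2) := by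
            refine mul_le_mul_of_nonneg_left (Real.exp_le_exp.2 hxa) (by positivity)
        _ = (n : ℝ) ^ n * rexp (1 / (2 * b)) * rexp (-(b / 2) * x ^ 2) := by
            rw [mul_assoc, ← Real.exp_add]; ring_nf
    calc ‖x ^ n * rexp (-b * x ^ 2)‖ = |x| ^ n * rexp (-b * x ^ 2) := by
          rw [norm_mul, norm_pow, Real.norm_eq_abs, Real.norm_eq_abs,
            abs_of_pos (Real.exp_pos _)]
      _ ≤ (n : ℝ) ^ n * rexp (1 / (2 * b)) * rexp (-(b / 2) * x ^ 2) := key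

lemma gauss_deriv {b : ℝ} (n : ℕ) (x : ℝ) :
    HasDerivAt (fun x : ℝ => x ^ (n + 1) * rexp (-b * x ^ 2))
      ((n + 1 : ℝ) * (x ^ n * rexp (-b * x ^ 2)) -
        2 * b * (x ^ (n + 2) * rexp (-b * x ^ 2))) x := by
  have h1 : HasDerivAt (fun x : ℝ => rexp (-b * x ^ 2))
      (rexp (-b * x ^ 2) * (-b * (2 * x ^ 1))) x :=
    ((hasDerivAt_pow 2 x).const_mul (-b)).exp
  have h2 := (hasDerivAt_pow (n + 1) x).mul h1
  refine h2.congr_deriv ?_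
  push_cast
  ring

lemma gauss_rec {b : ℝ} (hb : 0 < b) (n : ℕ) :
    (n + 1 : ℝ) * ∫ x : ℝ, x ^ n * rexp (-b * x ^ 2) =
      2 * b * ∫ x : ℝ, x ^ (n + 2) * rexp (-b * x ^ 2) := by
  have key := integral_eq_zero_of_hasDerivAt_of_integrable (gauss_deriv (b := b) n)
    (((integrable_pow_mul_gauss hb n).const_mul _).sub
      ((integrable_pow_mul_gauss hb (n + 2)).const_mul _))
    (integrable_pow_mul_gauss hb (n + 1))
  rw [integral_sub ((integrable_pow_mul_gauss hb n).const_mul _)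
    ((integrable_pow_mul_gauss hb (n + 2)).const_mul _),
    integral_const_mul, integral_const_mul] at key
  linarith

lemma gauss_I0 {b : ℝ} (hb : 0 < b) :
    ∫ x : ℝ, x ^ 0 * rexp (-b * x ^ 2) = √(π / b) := by
  simp only [pow_zero, one_mul]
  exact integral_gaussian b

lemma gauss_I1 {b : ℝ} (hb : 0 < b) : ∫ x : ℝ, x ^ 1 * rexp (-b * x ^ 2) = 0 := by
  have hderiv : ∀ x : ℝ, HasDerivAt (fun x : ℝ => rexp (-b * x ^ 2))
      ((-2 * b) * (x ^ 1 * rexp (-b * x ^ 2))) x := by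
    intro x
    have h1 : HasDerivAt (fun x : ℝ => rexp (-b * x ^ 2))
        (rexp (-b * x ^ 2) * (-b * (2 * x ^ 1))) x :=
      ((hasDerivAt_pow 2 x).const_mul (-b)).exp
    convert h1 using 1
    ring
  have key := integral_eq_zero_of_hasDerivAt_of_integrable hderiv
    ((integrable_pow_mul_gauss hb 1).const_mul _) (integrable_exp_neg_mul_sq hb)
  rw [integral_const_mul] at key
  rcases mul_eq_zero.1 key with h | h
  · nlinarith
  · exact h

lemma gauss_I2 {b : ℝ} (hb : 0 < b) :
    ∫ x : ℝ, x ^ 2 * rexp (-b * x ^ 2) = √(π / b) / (2 * b) := by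
  have h := gauss_rec hb 0
  rw [gauss_I0 hb] at h
  norm_num at h ⊢
  rw [eq_div_iff (by positivity : (2 : ℝ) * b ≠ 0)]
  linarith

lemma gauss_I3 {b : ℝ} (hb : 0 < b) : ∫ x : ℝ, x ^ 3 * rexp (-b * x ^ 2) = 0 := by
  have h := gauss_rec hb 1
  rw [gauss_I1 hb, mul_zero] at h
  rcases mul_eq_zero.1 h.symm with h' | h'
  · nlinarith
  · exact h'

lemma gauss_I4 {b : ℝ} (hb : 0 < b) :
    ∫ x : ℝ, x ^ 4 * rexp (-b * x ^ 2) = 3 * √(π / b) / (4 * b ^ 2) := by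
  have h := gauss_rec hb 2
  rw [gauss_I2 hb] at h
  norm_num at h ⊢
  rw [eq_div_iff (by positivity : (4 : ℝ) * b ^ 2 ≠ 0)]
  have hne : (2 : ℝ) * b ≠ 0 := by positivity
  have h2 : 3 * √(π / b) = 2 * b * (∫ x : ℝ, x ^ 4 * rexp (-(b * x ^ 2))) * (2 * b) := by
    calc 3 * √(π / b) = 3 * (√(π / b) / (2 * b)) * (2 * b) := by
          rw [mul_assoc, div_mul_cancel₀ _ hne]
      _ = 2 * b * (∫ x : ℝ, x ^ 4 * rexp (-(b * x ^ 2))) * (2 * b) := by rw [h]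
  nlinarith [h2]



-- placeholders for stage-1/2 results
lemma integral_gaussianReal_density {v : ℝ≥0} (hv : v ≠ 0) (g : ℝ → ℝ) :
    ∫ x, g x ∂(gaussianReal 0 v) = ∫ x, gaussianPDFReal 0 v x * g x := by
  rw [gaussianReal_of_var_ne_zero _ hv, gaussianPDF_def]
  have hrw : (fun x => ENNReal.ofReal (gaussianPDFReal 0 v x))
      = fun x => ((Real.toNNReal (gaussianPDFReal 0 v x) : ℝ≥0) : ℝ≥0∞) := rfl
  rw [hrw, integral_withDensity_eq_integral_smul
    ((measurable_gaussianPDFReal 0 v).real_toNNReal) g]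
  congr 1
  funext x
  rw [NNReal.smul_def, Real.coe_toNNReal _ (gaussianPDFReal_nonneg 0 v x), smul_eq_mul]

lemma gaussianPDFReal_zero_mul_pow {v : ℝ≥0} (hv : v ≠ 0) (n : ℕ) :
    (fun x => gaussianPDFReal 0 v x * x ^ n)
      = fun x => (√(2 * π * (v : ℝ)))⁻¹ * (x ^ n * rexp (-((2 * (v : ℝ))⁻¹) * x ^ 2)) := by
  funext x
  rw [gaussianPDFReal]
  have hv' : (0 : ℝ) < v := lt_of_le_of_ne v.coe_nonneg (by exact_mod_cast (Ne.symm hv))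
  rw [show -(x - 0) ^ 2 / (2 * (v : ℝ)) = -((2 * (v : ℝ))⁻¹) * x ^ 2 by field_simp; ring]
  ring

lemma integrable_pow_gaussianReal (v : ℝ≥0) (n : ℕ) :
    Integrable (fun x => x ^ n) (gaussianReal 0 v) := by
  by_cases hv : v = 0
  · rw [hv, gaussianReal_zero_var]
    refine ⟨(measurable_id.pow_const n).aestronglyMeasurable, ?_⟩
    rw [HasFiniteIntegral, lintegral_dirac' _ ((measurable_id'.pow_const n).enorm)]
    exact ENNReal.coe_lt_top
  · have hv' : (0 : ℝ) < v := lt_of_le_of_ne v.coe_nonneg (by exact_mod_cast (Ne.symm hv))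
    have hb : (0 : ℝ) < (2 * (v : ℝ))⁻¹ := by positivity
    rw [gaussianReal_of_var_ne_zero _ hv, gaussianPDF_def]
    have hrw : (fun x => ENNReal.ofReal (gaussianPDFReal 0 v x))
        = fun x => ((Real.toNNReal (gaussianPDFReal 0 v x) : ℝ≥0) : ℝ≥0∞) := rfl
    rw [hrw, integrable_withDensity_iff_integrable_smul
      ((measurable_gaussianPDFReal 0 v).real_toNNReal)]
    have : (fun x => (Real.toNNReal (gaussianPDFReal 0 v x) : ℝ≥0) • (x ^ n : ℝ))
        = fun x => (√(2 * π * (v : ℝ)))⁻¹ * (x ^ n * rexp (-((2 * (v : ℝ))⁻¹) * x ^ 2)) := by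
      funext x
      rw [NNReal.smul_def, Real.coe_toNNReal _ (gaussianPDFReal_nonneg 0 v x), smul_eq_mul]
      exact congrFun (gaussianPDFReal_zero_mul_pow hv n) x
    rw [this]
    exact (integrable_pow_mul_gauss hb n).const_mul _

section moments
variable {v : ℝ≥0}

lemma gauss_setup (hv : v ≠ 0) : (0 : ℝ) < (v : ℝ) :=
  lt_of_le_of_ne v.coe_nonneg (by exact_mod_cast (Ne.symm hv))

lemma gauss_sqrt_eq (hv : v ≠ 0) : √(π / (2 * (v : ℝ))⁻¹) = √(2 * π * (v : ℝ)) := by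
  have hv' := gauss_setup hv
  congr 1
  field_simp

lemma integral_pow_gaussianReal_one (v : ℝ≥0) : ∫ x, x ^ 1 ∂(gaussianReal 0 v) = 0 := by
  by_cases hv : v = 0
  · subst hv; rw [gaussianReal_zero_var, integral_dirac]; norm_num
  · have hv' := gauss_setup hv
    have hb : (0 : ℝ) < (2 * (v : ℝ))⁻¹ := by positivity
    rw [integral_gaussianReal_density hv, gaussianPDFReal_zero_mul_pow hv 1,
      integral_const_mul, gauss_I1 hb, mul_zero]

lemma integral_pow_gaussianReal_three (v : ℝ≥0) : ∫ x, x ^ 3 ∂(gaussianReal 0 v) = 0 := by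
  by_cases hv : v = 0
  · subst hv; rw [gaussianReal_zero_var, integral_dirac]; norm_num
  · have hv' := gauss_setup hv
    have hb : (0 : ℝ) < (2 * (v : ℝ))⁻¹ := by positivity
    rw [integral_gaussianReal_density hv, gaussianPDFReal_zero_mul_pow hv 3,
      integral_const_mul, gauss_I3 hb, mul_zero]

lemma integral_pow_gaussianReal_two (v : ℝ≥0) : ∫ x, x ^ 2 ∂(gaussianReal 0 v) = (v : ℝ) := by
  by_cases hv : v = 0
  · subst hv; rw [gaussianReal_zero_var, integral_dirac]; norm_num
  · have hv' := gauss_setup hv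
    have hb : (0 : ℝ) < (2 * (v : ℝ))⁻¹ := by positivity
    have hsvpos : (0 : ℝ) < √(2 * π * (v : ℝ)) := Real.sqrt_pos.2 (by positivity)
    rw [integral_gaussianReal_density hv, gaussianPDFReal_zero_mul_pow hv 2,
      integral_const_mul, gauss_I2 hb, gauss_sqrt_eq hv]
    rw [show (2 : ℝ) * (2 * (v : ℝ))⁻¹ = ((v : ℝ))⁻¹ by field_simp]
    field_simp

lemma integral_pow_gaussianReal_four (v : ℝ≥0) :
    ∫ x, x ^ 4 ∂(gaussianReal 0 v) = 3 * (v : ℝ) ^ 2 := by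
  by_cases hv : v = 0
  · subst hv; rw [gaussianReal_zero_var, integral_dirac]; norm_num
  · have hv' := gauss_setup hv
    have hb : (0 : ℝ) < (2 * (v : ℝ))⁻¹ := by positivity
    have hsvpos : (0 : ℝ) < √(2 * π * (v : ℝ)) := Real.sqrt_pos.2 (by positivity)
    rw [integral_gaussianReal_density hv, gaussianPDFReal_zero_mul_pow hv 4,
      integral_const_mul, gauss_I4 hb, gauss_sqrt_eq hv]
    rw [show (4 : ℝ) * ((2 * (v : ℝ))⁻¹) ^ 2 = ((v : ℝ) ^ 2)⁻¹ by field_simp; ring]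
    field_simp

end moments

lemma integrable_shift_pow4 (v : ℝ≥0) (c : ℝ) :
    Integrable (fun x => (x + c) ^ 4) (gaussianReal 0 v) := by
  have hexp : (fun x : ℝ => (x + c) ^ 4) = fun x =>
      x ^ 4 + ((4 * c) * x ^ 3 + ((6 * c ^ 2) * x ^ 2 + ((4 * c ^ 3) * x ^ 1 + c ^ 4))) := by
    funext x; ring
  rw [hexp]
  exact (integrable_pow_gaussianReal v 4).add
    (((integrable_pow_gaussianReal v 3).const_mul _).add
      (((integrable_pow_gaussianReal v 2).const_mul _).add
        (((integrable_pow_gaussianReal v 1).const_mul _).add (integrable_const _))))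

lemma integral_shift_pow4 (v : ℝ≥0) (c : ℝ) :
    ∫ x, (x + c) ^ 4 ∂(gaussianReal 0 v) = 3 * (v : ℝ) ^ 2 + 6 * c ^ 2 * (v : ℝ) + c ^ 4 := by
  have hexp : (fun x : ℝ => (x + c) ^ 4) = fun x =>
      x ^ 4 + (4 * c * x ^ 3 + (6 * c ^ 2 * x ^ 2 + (4 * c ^ 3 * x ^ 1 + c ^ 4))) := by
    funext x; ring
  have i0 : Integrable (fun _ : ℝ => c ^ 4) (gaussianReal 0 v) := integrable_const _
  have i1 : Integrable (fun x : ℝ => 4 * c ^ 3 * x ^ 1 + c ^ 4) (gaussianReal 0 v) :=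
    ((integrable_pow_gaussianReal v 1).const_mul _).add i0
  have i2 : Integrable (fun x : ℝ => 6 * c ^ 2 * x ^ 2 + (4 * c ^ 3 * x ^ 1 + c ^ 4))
      (gaussianReal 0 v) := ((integrable_pow_gaussianReal v 2).const_mul _).add i1
  have i3 : Integrable
      (fun x : ℝ => 4 * c * x ^ 3 + (6 * c ^ 2 * x ^ 2 + (4 * c ^ 3 * x ^ 1 + c ^ 4)))
      (gaussianReal 0 v) := ((integrable_pow_gaussianReal v 3).const_mul _).add i2
  rw [hexp, integral_add (integrable_pow_gaussianReal v 4) i3,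
    integral_add ((integrable_pow_gaussianReal v 3).const_mul _) i2,
    integral_add ((integrable_pow_gaussianReal v 2).const_mul _) i1,
    integral_add ((integrable_pow_gaussianReal v 1).const_mul _) i0,
    integral_const_mul, integral_const_mul, integral_const_mul, integral_const,
    integral_pow_gaussianReal_four, integral_pow_gaussianReal_three,
    integral_pow_gaussianReal_two, integral_pow_gaussianReal_one]
  simp [measure_univ]
  ring


lemma polar4 {V : Type*} [AddCommGroup V] [Module ℝ V]
    (T : V → V → V → V → ℝ)
    (ha : ∀ x x' y z w, T (x + x') y z w = T x y z w + T x' y z w)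
    (hs : ∀ (c : ℝ) x y z w, T (c • x) y z w = c * T x y z w)
    (h12 : ∀ x y z w, T x y z w = T y x z w)
    (h23 : ∀ x y z w, T x y z w = T x z y w)
    (h34 : ∀ x y z w, T x y z w = T x y w z)
    (hdiag : ∀ x, T x x x x = 0) :
    ∀ a b c d, T a b c d = 0 := by
  have h13 : ∀ x y z w, T x y z w = T z y x w := by
    intro x y z w; rw [h23, h12, h23]
  have h14 : ∀ x y z w, T x y z w = T w y z x := by
    intro x y z w; rw [h34, h13, h34]
  have ha2 : ∀ x y y' z w, T x (y + y') z w = T x y z w + T x y' z w := by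
    intro x y y' z w; rw [h12, ha, h12, h12 y']
  have ha3 : ∀ x y z z' w, T x y (z + z') w = T x y z w + T x y z' w := by
    intro x y z z' w; rw [h13, ha, h13, h13 z']
  have ha4 : ∀ x y z w w', T x y z (w + w') = T x y z w + T x y z w' := by
    intro x y z w w'; rw [h14, ha, h14, h14 w']
  have hs2 : ∀ (c : ℝ) x y z w, T x (c • y) z w = c * T x y z w := by
    intro c x y z w; rw [h12, hs, h12]
  have hs3 : ∀ (c : ℝ) x y z w, T x y (c • z) w = c * T x y z w := by
    intro c x y z w; rw [h13, hs, h13]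
  have hs4 : ∀ (c : ℝ) x y z w, T x y z (c • w) = c * T x y z w := by
    intro c x y z w; rw [h14, hs, h14]
  -- main expansion identity
  have P : ∀ x y : V, 4 * T x x x y + 6 * T x x y y + 4 * T x y y y = 0 := by
    intro x y
    have h := hdiag (x + y)
    simp only [ha, ha2, ha3, ha4] at h
    have e1 : T x x y x = T x x x y := h34 x x y x
    have e2 : T x y x x = T x x y x := h23 x y x x
    have e3 : T y x x x = T x y x x := h12 y x x x
    have e4 : T x y x y = T x x y y := h23 x y x y
    have e5 : T x y y x = T x y x y := h34 x y y x
    have e6 : T y x x y = T x y x y := h12 y x x y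
    have e7 : T y x y x = T x y y x := h12 y x y x
    have e8 : T y y x x = T x y y x := h13 y y x x
    have e9 : T y x y y = T x y y y := h12 y x y y
    have e10 : T y y x y = T x y y y := h13 y y x y
    have e11 : T y y y x = T x y y y := h14 y y y x
    have d1 := hdiag x
    have d2 := hdiag y
    linarith
  have hneg : ∀ x y : V, T x x x y + T x y y y = 0 ∧ T x x y y = 0 := by
    intro x y
    have h1 := P x y
    have h2 := P x (-y)
    have k1 : T x x x (-y) = -T x x x y := by
      rw [show (-y : V) = (-1 : ℝ) • y by simp, hs4]; ring
    have k2 : T x x (-y) (-y) = T x x y y := by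
      rw [show (-y : V) = (-1 : ℝ) • y by simp, hs3, hs4]; ring
    have k3 : T x (-y) (-y) (-y) = -T x y y y := by
      rw [show (-y : V) = (-1 : ℝ) • y by simp, hs2, hs3, hs4]; ring
    rw [k1, k2, k3] at h2
    constructor <;> linarith
  have hAC : ∀ x y : V, T x x x y = 0 := by
    intro x y
    have h1 := P x ((2 : ℝ) • y)
    have k1 : T x x x ((2 : ℝ) • y) = 2 * T x x x y := hs4 2 x x x y
    have k2 : T x x ((2 : ℝ) • y) ((2 : ℝ) • y) = 4 * T x x y y := by
      rw [hs3, hs4]; ring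
    have k3 : T x ((2 : ℝ) • y) ((2 : ℝ) • y) ((2 : ℝ) • y) = 8 * T x y y y := by
      rw [hs2, hs3, hs4]; ring
    rw [k1, k2, k3] at h1
    have hB := (hneg x y).2
    have hAC' := (hneg x y).1
    linarith
  have hB : ∀ x y : V, T x x y y = 0 := fun x y => (hneg x y).2
  have hB2 : ∀ u v y : V, T u v y y = 0 := by
    intro u v y
    have h := hB (u + v) y
    simp only [ha, ha2] at h
    have e1 : T v u y y = T u v y y := h12 v u y y
    have hu := hB u y
    have hv := hB v y
    linarith
  intro a b c d
  have h := hB2 a b (c + d)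
  simp only [ha3, ha4] at h
  have e1 : T a b d c = T a b c d := h34 a b d c
  have hc := hB2 a b c
  have hd := hB2 a b d
  linarith

/-- A random vector `X` is Gaussian with mean `μ` and covariance `C` iff every linear
functional of `X` is (one-dimensional) Gaussian with the corresponding parameters. -/
def IsGaussianVec {Ω : Type*} [MeasurableSpace Ω] (P : Measure Ω) {d : ℕ}
    (X : Ω → Fin d → ℝ) (μ : Fin d → ℝ) (C : Matrix (Fin d) (Fin d) ℝ) : Prop :=
  Measurable X ∧ ∀ a : Fin d → ℝ,
    Measure.map (fun ω => ∑ i, a i * X ω i) P =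
      gaussianReal (∑ i, a i * μ i) (Real.toNNReal (∑ i, ∑ j, a i * C i j * a j))



section aux

variable {p : ℕ} {Ω : Type*} [MeasurableSpace Ω]

/-- affine functional of the random vector -/
def Lfun (zhat : Ω → Fin p → ℝ) (v : (Fin p → ℝ) × ℝ) (ω : Ω) : ℝ :=
  (∑ i, v.1 i * zhat ω i) + v.2

/-- covariance of two affine functionals -/
def Bfun (Chat : Matrix (Fin p) (Fin p) ℝ) (v w : (Fin p → ℝ) × ℝ) : ℝ :=
  (∑ i, ∑ j, v.1 i * Chat i j * w.1 j) + v.2 * w.2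

lemma integrable_mul_four {P : Measure Ω} {f g h k : Ω → ℝ}
    (hfm : Measurable f) (hgm : Measurable g) (hhm : Measurable h) (hkm : Measurable k)
    (hf4 : Integrable (fun ω => f ω ^ 4) P) (hg4 : Integrable (fun ω => g ω ^ 4) P)
    (hh4 : Integrable (fun ω => h ω ^ 4) P) (hk4 : Integrable (fun ω => k ω ^ 4) P) :
    Integrable (fun ω => f ω * g ω * h ω * k ω) P := by
  refine Integrable.mono' (((hf4.add hg4).add (hh4.add hk4)).div_const 4)
    (((hfm.mul hgm).mul hhm).mul hkm).aestronglyMeasurable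
    (Filter.Eventually.of_forall fun ω => ?_)
  simp only [Real.norm_eq_abs, Pi.add_apply]
  rw [abs_le]
  constructor <;>
  nlinarith [sq_nonneg (f ω * g ω - h ω * k ω), sq_nonneg (f ω * g ω + h ω * k ω),
    sq_nonneg (f ω ^ 2 - g ω ^ 2), sq_nonneg (h ω ^ 2 - k ω ^ 2),
    sq_nonneg (f ω ^ 2 + g ω ^ 2), sq_nonneg (h ω ^ 2 + k ω ^ 2),
    sq_nonneg (f ω * g ω), sq_nonneg (h ω * k ω)]

variable (P : Measure Ω)

/-- fourth mixed moment of affine functionals -/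
noncomputable def Mfun (zhat : Ω → Fin p → ℝ) (v₁ v₂ v₃ v₄ : (Fin p → ℝ) × ℝ) : ℝ :=
  ∫ ω, Lfun zhat v₁ ω * Lfun zhat v₂ ω * Lfun zhat v₃ ω * Lfun zhat v₄ ω ∂P

theorem Mfun_eq [IsProbabilityMeasure P]
    (zhat : Ω → Fin p → ℝ) (Chat : Matrix (Fin p) (Fin p) ℝ)
    (hChat : Chat.PosSemidef) (hzhat : IsGaussianVec P zhat 0 Chat) :
    ∀ v₁ v₂ v₃ v₄ : (Fin p → ℝ) × ℝ,
      Mfun P zhat v₁ v₂ v₃ v₄ =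
        Bfun Chat v₁ v₂ * Bfun Chat v₃ v₄ + Bfun Chat v₁ v₃ * Bfun Chat v₂ v₄
          + Bfun Chat v₁ v₄ * Bfun Chat v₂ v₃ - 2 * (v₁.2 * v₂.2 * v₃.2 * v₄.2) := by
  -- measurability
  have hXm : Measurable zhat := hzhat.1
  have hL0m : ∀ a : Fin p → ℝ, Measurable fun ω => ∑ i, a i * zhat ω i := fun a =>
    Finset.measurable_sum _ fun i _ => ((measurable_pi_apply i).comp hXm).const_mul (a i)
  have hLm : ∀ v, Measurable (Lfun zhat v) := fun v => (hL0m v.1).add_const v.2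
  -- positivity of the quadratic form
  have hQnn : ∀ a : Fin p → ℝ, 0 ≤ ∑ i, ∑ j, a i * Chat i j * a j := by
    intro a
    have h0 : dotProduct (star a) (Chat *ᵥ a) = ∑ i, ∑ j, a i * Chat i j * a j := by
      simp only [dotProduct, Matrix.mulVec, Pi.star_apply, star_trivial, Finset.mul_sum]
      exact Finset.sum_congr rfl fun i _ => Finset.sum_congr rfl fun j _ => by ring
    have := hChat.dotProduct_mulVec_nonneg a
    rwa [h0] at this
  -- the law of the affine functional
  have hlaw : ∀ a : Fin p → ℝ, Measure.map (fun ω => ∑ i, a i * zhat ω i) P =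
      gaussianReal 0 (Real.toNNReal (∑ i, ∑ j, a i * Chat i j * a j)) := by
    intro a
    have := hzhat.2 a
    simpa using this
  have hcoe : ∀ a : Fin p → ℝ,
      ((Real.toNNReal (∑ i, ∑ j, a i * Chat i j * a j) : ℝ≥0) : ℝ)
        = ∑ i, ∑ j, a i * Chat i j * a j := fun a => Real.coe_toNNReal _ (hQnn a)
  -- fourth moment of each affine functional
  have hmom : ∀ v : (Fin p → ℝ) × ℝ, ∫ ω, (Lfun zhat v ω) ^ 4 ∂P =
      3 * (∑ i, ∑ j, v.1 i * Chat i j * v.1 j) ^ 2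
        + 6 * v.2 ^ 2 * (∑ i, ∑ j, v.1 i * Chat i j * v.1 j) + v.2 ^ 4 := by
    intro v
    have h1 : ∫ ω, (Lfun zhat v ω) ^ 4 ∂P
        = ∫ x, (x + v.2) ^ 4 ∂(Measure.map (fun ω => ∑ i, v.1 i * zhat ω i) P) :=
      (integral_map (hL0m v.1).aemeasurable
        ((measurable_id.add_const v.2).pow_const 4).aestronglyMeasurable).symm
    rw [h1, hlaw, integral_shift_pow4, hcoe]
  have hint4 : ∀ v : (Fin p → ℝ) × ℝ, Integrable (fun ω => (Lfun zhat v ω) ^ 4) P := by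
    intro v
    have h1 : Integrable (fun x => (x + v.2) ^ 4)
        (Measure.map (fun ω => ∑ i, v.1 i * zhat ω i) P) := by
      rw [hlaw]; exact integrable_shift_pow4 _ _
    exact (integrable_map_measure ((measurable_id.add_const v.2).pow_const 4).aestronglyMeasurable
      (hL0m v.1).aemeasurable).mp h1
  have hprod : ∀ v₁ v₂ v₃ v₄, Integrable
      (fun ω => Lfun zhat v₁ ω * Lfun zhat v₂ ω * Lfun zhat v₃ ω * Lfun zhat v₄ ω) P :=
    fun v₁ v₂ v₃ v₄ => integrable_mul_four (hLm v₁) (hLm v₂) (hLm v₃) (hLm v₄)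
      (hint4 v₁) (hint4 v₂) (hint4 v₃) (hint4 v₄)
  -- linearity of Lfun
  have hLadd : ∀ v w ω, Lfun zhat (v + w) ω = Lfun zhat v ω + Lfun zhat w ω := by
    intro v w ω
    simp only [Lfun, Prod.fst_add, Prod.snd_add, Pi.add_apply, add_mul,
      Finset.sum_add_distrib]
    ring
  have hLsmul : ∀ (c : ℝ) v ω, Lfun zhat (c • v) ω = c * Lfun zhat v ω := by
    intro c v ω
    simp only [Lfun, Prod.smul_fst, Prod.smul_snd, Pi.smul_apply, smul_eq_mul,
      Finset.mul_sum, mul_add]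
    congr 1
    exact Finset.sum_congr rfl fun i _ => by ring
  -- symmetry of Chat
  have hsym : ∀ i j, Chat i j = Chat j i := by
    intro i j
    conv_lhs => rw [← hChat.1]
    simp [Matrix.conjTranspose_apply]
  -- properties of Bfun
  have hBadd : ∀ v w u, Bfun Chat (v + w) u = Bfun Chat v u + Bfun Chat w u := by
    intro v w u
    simp only [Bfun, Prod.fst_add, Prod.snd_add, Pi.add_apply, add_mul,
      Finset.sum_add_distrib]
    ring
  have hBsmul : ∀ (c : ℝ) v u, Bfun Chat (c • v) u = c * Bfun Chat v u := by
    intro c v u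
    simp only [Bfun, Prod.smul_fst, Prod.smul_snd, Pi.smul_apply, smul_eq_mul, mul_add,
      Finset.mul_sum]
    congr 1
    · exact Finset.sum_congr rfl fun i _ => Finset.sum_congr rfl fun j _ => by ring
    · ring
  have hBsym : ∀ v u, Bfun Chat v u = Bfun Chat u v := by
    intro v u
    simp only [Bfun]
    congr 1
    · rw [Finset.sum_comm]
      exact Finset.sum_congr rfl fun j _ => Finset.sum_congr rfl fun i _ => by
        rw [hsym i j]; ring
    · ring
  -- properties of Mfun
  have hMadd : ∀ v v' v₂ v₃ v₄, Mfun P zhat (v + v') v₂ v₃ v₄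
      = Mfun P zhat v v₂ v₃ v₄ + Mfun P zhat v' v₂ v₃ v₄ := by
    intro v v' v₂ v₃ v₄
    simp only [Mfun]
    rw [show (fun ω => Lfun zhat (v + v') ω * Lfun zhat v₂ ω * Lfun zhat v₃ ω * Lfun zhat v₄ ω)
        = (fun ω => Lfun zhat v ω * Lfun zhat v₂ ω * Lfun zhat v₃ ω * Lfun zhat v₄ ω
          + Lfun zhat v' ω * Lfun zhat v₂ ω * Lfun zhat v₃ ω * Lfun zhat v₄ ω) from
      funext fun ω => by rw [hLadd]; ring]
    exact integral_add (hprod v v₂ v₃ v₄) (hprod v' v₂ v₃ v₄)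
  have hMsmul : ∀ (c : ℝ) v v₂ v₃ v₄, Mfun P zhat (c • v) v₂ v₃ v₄
      = c * Mfun P zhat v v₂ v₃ v₄ := by
    intro c v v₂ v₃ v₄
    simp only [Mfun]
    rw [show (fun ω => Lfun zhat (c • v) ω * Lfun zhat v₂ ω * Lfun zhat v₃ ω * Lfun zhat v₄ ω)
        = (fun ω => c * (Lfun zhat v ω * Lfun zhat v₂ ω * Lfun zhat v₃ ω * Lfun zhat v₄ ω)) from
      funext fun ω => by rw [hLsmul]; ring]
    exact integral_const_mul c _
  have hM12 : ∀ v₁ v₂ v₃ v₄, Mfun P zhat v₁ v₂ v₃ v₄ = Mfun P zhat v₂ v₁ v₃ v₄ := by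
    intro v₁ v₂ v₃ v₄
    simp only [Mfun]
    congr 1
    funext ω
    ring
  have hM23 : ∀ v₁ v₂ v₃ v₄, Mfun P zhat v₁ v₂ v₃ v₄ = Mfun P zhat v₁ v₃ v₂ v₄ := by
    intro v₁ v₂ v₃ v₄
    simp only [Mfun]
    congr 1
    funext ω
    ring
  have hM34 : ∀ v₁ v₂ v₃ v₄, Mfun P zhat v₁ v₂ v₃ v₄ = Mfun P zhat v₁ v₂ v₄ v₃ := by
    intro v₁ v₂ v₃ v₄
    simp only [Mfun]
    congr 1
    funext ω
    ring
  have hMdiag : ∀ v, Mfun P zhat v v v v =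
      3 * (∑ i, ∑ j, v.1 i * Chat i j * v.1 j) ^ 2
        + 6 * v.2 ^ 2 * (∑ i, ∑ j, v.1 i * Chat i j * v.1 j) + v.2 ^ 4 := by
    intro v
    simp only [Mfun]
    rw [show (fun ω => Lfun zhat v ω * Lfun zhat v ω * Lfun zhat v ω * Lfun zhat v ω)
        = (fun ω => (Lfun zhat v ω) ^ 4) from funext fun ω => by ring]
    exact hmom v
  -- apply polarization to the difference
  set T : (Fin p → ℝ) × ℝ → (Fin p → ℝ) × ℝ → (Fin p → ℝ) × ℝ → (Fin p → ℝ) × ℝ → ℝ :=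
    fun v₁ v₂ v₃ v₄ => Mfun P zhat v₁ v₂ v₃ v₄ -
      (Bfun Chat v₁ v₂ * Bfun Chat v₃ v₄ + Bfun Chat v₁ v₃ * Bfun Chat v₂ v₄
        + Bfun Chat v₁ v₄ * Bfun Chat v₂ v₃ - 2 * (v₁.2 * v₂.2 * v₃.2 * v₄.2)) with hT
  have hzero : ∀ v₁ v₂ v₃ v₄, T v₁ v₂ v₃ v₄ = 0 := by
    apply polar4
    · intro x x' y z w
      simp only [hT, hMadd, hBadd, Prod.snd_add]
      ring
    · intro c x y z w
      simp only [hT, hMsmul, hBsmul, Prod.smul_snd, smul_eq_mul]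
      ring
    · intro x y z w
      simp only [hT]
      rw [hM12, hBsym x y]
      ring
    · intro x y z w
      simp only [hT]
      rw [hM23, hBsym y z]
      ring
    · intro x y z w
      simp only [hT]
      rw [hM34, hBsym z w]
      ring
    · intro x
      simp only [hT, hMdiag]
      have : Bfun Chat x x = (∑ i, ∑ j, x.1 i * Chat i j * x.1 j) + x.2 * x.2 := rfl
      rw [this]
      ring
  intro v₁ v₂ v₃ v₄
  have := hzero v₁ v₂ v₃ v₄
  simp only [hT] at this
  linarith

end aux

theorem Lfun_prod_integrable {p : ℕ} {Ω : Type*} [MeasurableSpace Ω]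
    (P : Measure Ω) [IsProbabilityMeasure P]
    (zhat : Ω → Fin p → ℝ) (Chat : Matrix (Fin p) (Fin p) ℝ)
    (hzhat : IsGaussianVec P zhat 0 Chat) :
    ∀ v₁ v₂ v₃ v₄ : (Fin p → ℝ) × ℝ, Integrable
      (fun ω => Lfun zhat v₁ ω * Lfun zhat v₂ ω * Lfun zhat v₃ ω * Lfun zhat v₄ ω) P := by
  have hXm : Measurable zhat := hzhat.1
  have hL0m : ∀ a : Fin p → ℝ, Measurable fun ω => ∑ i, a i * zhat ω i := fun a =>
    Finset.measurable_sum _ fun i _ => ((measurable_pi_apply i).comp hXm).const_mul (a i)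
  have hLm : ∀ v, Measurable (Lfun zhat v) := fun v => (hL0m v.1).add_const v.2
  have hlaw : ∀ a : Fin p → ℝ, Measure.map (fun ω => ∑ i, a i * zhat ω i) P =
      gaussianReal 0 (Real.toNNReal (∑ i, ∑ j, a i * Chat i j * a j)) := by
    intro a
    have := hzhat.2 a
    simpa using this
  have hint4 : ∀ v : (Fin p → ℝ) × ℝ, Integrable (fun ω => (Lfun zhat v ω) ^ 4) P := by
    intro v
    have h1 : Integrable (fun x => (x + v.2) ^ 4)
        (Measure.map (fun ω => ∑ i, v.1 i * zhat ω i) P) := by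
      rw [hlaw]; exact integrable_shift_pow4 _ _
    exact (integrable_map_measure ((measurable_id.add_const v.2).pow_const 4).aestronglyMeasurable
      (hL0m v.1).aemeasurable).mp h1
  exact fun v₁ v₂ v₃ v₄ => integrable_mul_four (hLm v₁) (hLm v₂) (hLm v₃) (hLm v₄)
    (hint4 v₁) (hint4 v₂) (hint4 v₃) (hint4 v₄)

/-- For `z = ẑ + r` with `ẑ ∼ N(0, C_ẑ)` and `C_z = C_ẑ + r rᵀ`,
for any `p × p` matrix `S`:
`E[z zᵀ S z zᵀ] = C_z S C_z + C_z Sᵀ C_z + ⟨C_z, S⟩ C_z − 2 ⟨r rᵀ, S⟩ r rᵀ`. -/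
theorem gaussian_fourth_moment_quadratic {p : ℕ}
    {Ω : Type*} [MeasurableSpace Ω] (P : Measure Ω) [IsProbabilityMeasure P]
    (zhat : Ω → Fin p → ℝ) (Chat : Matrix (Fin p) (Fin p) ℝ)
    (hChat : Chat.PosSemidef) (hzhat : IsGaussianVec P zhat 0 Chat)
    (r : Fin p → ℝ)
    (z : Ω → Fin p → ℝ) (hz : ∀ ω, z ω = zhat ω + r)
    (Cz : Matrix (Fin p) (Fin p) ℝ) (hCz : Cz = Chat + Matrix.vecMulVec r r)
    (S : Matrix (Fin p) (Fin p) ℝ) :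
    ∀ i j,
      (∫ ω, (∑ a, ∑ b, z ω a * S a b * z ω b) * (z ω i * z ω j) ∂P)
        = (Cz * S * Cz + Cz * Sᵀ * Cz
            + (∑ a, ∑ b, Cz a b * S a b) • Cz
            - (2 * ∑ a, ∑ b, (r a * r b) * S a b) • Matrix.vecMulVec r r) i j := by
  intro i j
  set u : Fin p → (Fin p → ℝ) × ℝ := fun a => (Pi.single a (1 : ℝ), r a) with hu_def
  have hu : ∀ (a : Fin p) (ω : Ω), Lfun zhat (u a) ω = z ω a := by
    intro a ω
    simp only [hu_def, Lfun, hz ω, Pi.add_apply, Pi.single_apply, ite_mul, one_mul,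
      zero_mul, Finset.sum_ite_eq', Finset.mem_univ, if_true]
  -- symmetry of Chat
  have hsym : ∀ a b, Chat a b = Chat b a := by
    intro a b
    conv_lhs => rw [← hChat.1]
    simp [Matrix.conjTranspose_apply]
  have hCzsym : ∀ a b, Cz a b = Cz b a := by
    intro a b
    rw [hCz]
    simp [Matrix.add_apply, Matrix.vecMulVec_apply, hsym a b]
    ring
  have hBu : ∀ a b, Bfun Chat (u a) (u b) = Cz a b := by
    intro a b
    rw [hCz]
    simp only [hu_def, Bfun, Pi.single_apply, ite_mul, one_mul, zero_mul, mul_ite, mul_one,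
      mul_zero, Finset.sum_ite_eq', Finset.mem_univ, if_true, Matrix.add_apply,
      Matrix.vecMulVec_apply]
  have hzprod : ∀ a b c d, Integrable (fun ω => z ω a * z ω b * z ω c * z ω d) P := by
    intro a b c d
    have := Lfun_prod_integrable P zhat Chat hzhat (u a) (u b) (u c) (u d)
    rwa [show (fun ω => Lfun zhat (u a) ω * Lfun zhat (u b) ω * Lfun zhat (u c) ω
        * Lfun zhat (u d) ω) = fun ω => z ω a * z ω b * z ω c * z ω d from
      funext fun ω => by rw [hu, hu, hu, hu]] at this
  have hW : ∀ a b c d, (∫ ω, z ω a * z ω b * z ω c * z ω d ∂P)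
      = Cz a b * Cz c d + Cz a c * Cz b d + Cz a d * Cz b c
        - 2 * (r a * r b * r c * r d) := by
    intro a b c d
    have := Mfun_eq P zhat Chat hChat hzhat (u a) (u b) (u c) (u d)
    simp only [Mfun] at this
    rw [show (fun ω => Lfun zhat (u a) ω * Lfun zhat (u b) ω * Lfun zhat (u c) ω
        * Lfun zhat (u d) ω) = fun ω => z ω a * z ω b * z ω c * z ω d from
      funext fun ω => by rw [hu, hu, hu, hu]] at this
    rw [this, hBu, hBu, hBu, hBu, hBu, hBu]
  -- expand the integrand
  rw [show (fun ω => (∑ a, ∑ b, z ω a * S a b * z ω b) * (z ω i * z ω j))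
      = fun ω => ∑ a, ∑ b, S a b * (z ω a * z ω b * z ω i * z ω j) from
    funext fun ω => by
      rw [Finset.sum_mul]
      exact Finset.sum_congr rfl fun a _ => by
        rw [Finset.sum_mul]
        exact Finset.sum_congr rfl fun b _ => by ring]
  rw [integral_finset_sum _ (fun a _ =>
    integrable_finset_sum _ (fun b _ => (hzprod a b i j).const_mul (S a b)))]
  have step : ∀ a : Fin p, (∫ ω, ∑ b, S a b * (z ω a * z ω b * z ω i * z ω j) ∂P)
      = ∑ b, S a b * (Cz a b * Cz i j + Cz a i * Cz b j + Cz a j * Cz b i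
          - 2 * (r a * r b * r i * r j)) := by
    intro a
    rw [integral_finset_sum _ (fun b _ => (hzprod a b i j).const_mul (S a b))]
    exact Finset.sum_congr rfl fun b _ => by rw [integral_const_mul, hW a b i j]
  rw [Finset.sum_congr rfl fun a _ => step a]
  -- now pure matrix algebra
  simp only [Matrix.add_apply, Matrix.sub_apply, Matrix.smul_apply, smul_eq_mul,
    Matrix.vecMulVec_apply, Matrix.mul_apply, Matrix.transpose_apply]
  have p1 : (∑ x, (∑ y, Cz i y * S y x) * Cz x j) = ∑ a, ∑ b, Cz i a * S a b * Cz b j := by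
    simp only [Finset.sum_mul]
    exact Finset.sum_comm
  have p2 : (∑ x, (∑ y, Cz i y * S x y) * Cz x j) = ∑ a, ∑ b, Cz i b * S a b * Cz a j := by
    simp only [Finset.sum_mul]
  have p3 : (∑ a, ∑ b, Cz a b * S a b) * Cz i j = ∑ a, ∑ b, Cz a b * S a b * Cz i j := by
    simp only [Finset.sum_mul]
  have p4 : 2 * (∑ a, ∑ b, (r a * r b) * S a b) * (r i * r j)
      = ∑ a, ∑ b, 2 * ((r a * r b) * S a b) * (r i * r j) := by
    simp only [Finset.mul_sum, Finset.sum_mul]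
  rw [p1, p2, p3, p4, ← Finset.sum_add_distrib, ← Finset.sum_add_distrib,
    ← Finset.sum_sub_distrib]
  refine Finset.sum_congr rfl fun a _ => ?_
  rw [← Finset.sum_add_distrib, ← Finset.sum_add_distrib, ← Finset.sum_sub_distrib]
  refine Finset.sum_congr rfl fun b _ => ?_
  rw [hCzsym i a, hCzsym i b]
  ring
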